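/- Let α, μ_K, μ_φ, ε be real numbers with 0 < α ≤ 1-ε, |μ_K| ≤ 1-ε, μ_φ ≥ 0, ε ∈ (0,1), and suppose λ ∈ ℂ satisfies μ_K - μ_φ/(λ - α) - λ = 0 with λ ≠ α. If (μ_K - α)²/4 - μ_φ > 0 (so λ is real), then λ = (μ_K + α)/2 ± √((μ_K - α)²/4 - μ_φ), and |λ| ≤ 1 - ε. -/

import Mathlib

/-- Real-root case of the eigenvalue bound: if `λ` solves
`μ_K - μ_φ/(λ-α) - λ = 0` with positive discriminant, then
`λ = (μ_K+α)/2 ± √((μ_K-α)²/4 - μ_φ)` and `|λ| ≤ 1-ε`. -/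
theorem stmt_7 (α μK μφ ε : ℝ) (lam : ℂ)
    (hε : 0 < ε ∧ ε < 1) (hα : 0 < α ∧ α ≤ 1 - ε) (hμK : |μK| ≤ 1 - ε) (hμφ : 0 ≤ μφ)
    (hne : lam ≠ (α : ℂ))
    (heq : (μK : ℂ) - μφ / (lam - α) - lam = 0)
    (hdisc : 0 < (μK - α) ^ 2 / 4 - μφ) :
    (lam = ((μK + α) / 2 + Real.sqrt ((μK - α) ^ 2 / 4 - μφ) : ℝ) ∨
     lam = ((μK + α) / 2 - Real.sqrt ((μK - α) ^ 2 / 4 - μφ) : ℝ)) ∧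
    ‖lam‖ ≤ 1 - ε := by
  obtain ⟨hε0, hε1⟩ := hε
  obtain ⟨hα0, hα1⟩ := hα
  obtain ⟨hμK1, hμK2⟩ := abs_le.mp hμK
  set s := Real.sqrt ((μK - α) ^ 2 / 4 - μφ) with hs
  have hs0 : 0 ≤ s := Real.sqrt_nonneg _
  have hs2 : s ^ 2 = (μK - α) ^ 2 / 4 - μφ := Real.sq_sqrt hdisc.le
  have hsub : lam - (α : ℂ) ≠ 0 := sub_ne_zero.mpr hne
  have h2 : (μK : ℂ) * (lam - α) - μφ - lam * (lam - α) = 0 := by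
    have h := heq
    field_simp at h
    linear_combination h
  have hs2c : (s : ℂ) ^ 2 = ((μK : ℂ) - α) ^ 2 / 4 - μφ := by
    have h3 : ((s ^ 2 : ℝ) : ℂ) = (((μK - α) ^ 2 / 4 - μφ : ℝ) : ℂ) := by
      exact congrArg Complex.ofReal hs2
    push_cast at h3
    exact h3
  have hpoly : (lam - (((μK + α) / 2 + s : ℝ) : ℂ)) * (lam - (((μK + α) / 2 - s : ℝ) : ℂ)) = 0 := by
    push_cast
    linear_combination -h2 - hs2c
  have hsle : s ≤ |μK - α| / 2 := by
    have h4 : s ≤ Real.sqrt ((μK - α) ^ 2 / 4) := Real.sqrt_le_sqrt (by linarith)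
    rwa [show (μK - α) ^ 2 / 4 = (|μK - α| / 2) ^ 2 by rw [div_pow, sq_abs]; norm_num,
      Real.sqrt_sq (by positivity)] at h4
  have hroot : lam = (((μK + α) / 2 + s : ℝ) : ℂ) ∨ lam = (((μK + α) / 2 - s : ℝ) : ℂ) := by
    rcases mul_eq_zero.mp hpoly with h | h
    · exact Or.inl (sub_eq_zero.mp h)
    · exact Or.inr (sub_eq_zero.mp h)
  refine ⟨hroot, ?_⟩
  rcases abs_cases (μK - α) with ⟨he, _⟩ | ⟨he, _⟩ <;>
    rcases hroot with h | h <;>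
      · rw [h, Complex.norm_real, Real.norm_eq_abs, abs_le]
        constructor <;> linarith
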